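/- For every integer n ≥ 2, every vector v ∈ ℝⁿ and every radius r > 0, ∫_{S^{n-1}_r} ⟨v,y⟩ e^{−2⟨v,y⟩} dσ_r(y) = − r^n · |v| · γ_n'(2r|v|) · vol(S^{n-2}). -/

import Mathlib

open MeasureTheory

/-- The `(n-1)`-dimensional surface measure on the sphere of radius `r` centered at the
origin of `ℝⁿ`: the pushforward of the canonical surface measure `volume.toSphere` on the
unit sphere under the scaling `y ↦ r • y`, scaled by the factor `r^(n-1)`. -/
noncomputable def sphereMeasure (n : ℕ) (r : ℝ) :
    Measure (EuclideanSpace ℝ (Fin n)) :=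
  ENNReal.ofReal (r ^ (n - 1)) •
    Measure.map
      (fun y : Metric.sphere (0 : EuclideanSpace ℝ (Fin n)) 1 =>
        r • (y : EuclideanSpace ℝ (Fin n)))
      (volume : Measure (EuclideanSpace ℝ (Fin n))).toSphere

/-- `vol(S^d)`: the total surface measure of the unit sphere `S^d ⊆ ℝ^(d+1)`
(so `vol(S⁰) = 2`). -/
noncomputable def sphereVol (d : ℕ) : ℝ :=
  (sphereMeasure (d + 1) 1 Set.univ).toReal

/-- For an integer `n ≥ 2`, `γ_n (t) = ∫₀^π e^{t cos α} (sin α)^(n-2) dα`. -/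
noncomputable def gammaN (n : ℕ) (t : ℝ) : ℝ :=
  ∫ α in (0:ℝ)..Real.pi, Real.exp (t * Real.cos α) * Real.sin α ^ (n - 2)

/-- The derivative `γ_n' (t) = ∫₀^π cos α · e^{t cos α} (sin α)^(n-2) dα`. -/
noncomputable def gammaN' (n : ℕ) (t : ℝ) : ℝ :=
  ∫ α in (0:ℝ)..Real.pi, Real.cos α * Real.exp (t * Real.cos α) * Real.sin α ^ (n - 2)


open MeasureTheory Set Metric

noncomputable section ZonalAux

local notation "𝔼" n => EuclideanSpace ℝ (Fin n)

/-- Bump weight: indicator of `(1,2)`. -/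
def wFn : ℝ → ℝ := (Set.Ioo (1:ℝ) 2).indicator 1

lemma wFn_meas : Measurable wFn := measurable_one.indicator measurableSet_Ioo

lemma wFn_abs_le (s : ℝ) : |wFn s| ≤ 1 := by
  unfold wFn
  by_cases hs : s ∈ Set.Ioo (1:ℝ) 2 <;> simp [hs]

lemma wFn_eq_zero {s : ℝ} (hs : s ∉ Set.Ioo (1:ℝ) 2) : wFn s = 0 := by
  simp [wFn, hs]

/-- The normalization constant `∫_{(0,∞)} s^{m+1} w(s) ds`. -/
def auxC (m : ℕ) : ℝ := ∫ s in Ioi (0:ℝ), s ^ (m+1) * wFn s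

lemma auxC_pos (m : ℕ) : 0 < auxC m := by
  have h1 : ∀ s : ℝ, s ^ (m+1) * wFn s = (Set.Ioo (1:ℝ) 2).indicator (fun s => s ^ (m+1)) s := by
    intro s
    by_cases hs : s ∈ Set.Ioo (1:ℝ) 2 <;> simp [wFn, hs]
  unfold auxC
  simp only [h1]
  have hint : Ioi (0:ℝ) ∩ Ioo 1 2 = Ioo 1 2 :=
    Set.inter_eq_self_of_subset_right (fun x hx => lt_trans one_pos hx.1)
  rw [setIntegral_indicator measurableSet_Ioo, hint,
    ← integral_Ioc_eq_integral_Ioo, ← intervalIntegral.integral_of_le (by norm_num : (1:ℝ) ≤ 2),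
    integral_pow]
  have h2 : (1:ℝ) < 2 ^ (m+1+1) := one_lt_pow₀ one_lt_two (by omega)
  have h3 : (0:ℝ) < (m+1:ℕ) + 1 := by positivity
  rw [one_pow]
  apply div_pos (by linarith) (by positivity)

lemma aux_integral_volumeIoiPow (m : ℕ) (g : ℝ → ℝ) :
    ∫ x : Ioi (0:ℝ), g x ∂(Measure.volumeIoiPow m) = ∫ s in Ioi (0:ℝ), s ^ m * g s := by
  simp only [Measure.volumeIoiPow, ENNReal.ofReal]
  rw [integral_withDensity_eq_integral_smul
      ((measurable_subtype_coe.pow_const _).real_toNNReal) _,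
    integral_subtype_comap measurableSet_Ioi fun a : ℝ ↦ Real.toNNReal (a ^ m) • g a,
    setIntegral_congr_fun measurableSet_Ioi (g := fun s => s ^ m * g s) fun x hx ↦ ?_]
  rw [NNReal.smul_def, Real.coe_toNNReal _ (pow_nonneg hx.out.le _), smul_eq_mul]

lemma aux_disint {E : Type*} [NormedAddCommGroup E] [NormedSpace ℝ E] [MeasureSpace E]
    [BorelSpace E] [Nontrivial E] [FiniteDimensional ℝ E]
    [(volume : Measure E).IsAddHaarMeasure] (f : E → ℝ) :
    ∫ x, f x = ∫ p : sphere (0:E) 1 × Ioi (0:ℝ), f (p.2.1 • p.1.1)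
      ∂((volume : Measure E).toSphere.prod (Measure.volumeIoiPow (Module.finrank ℝ E - 1))) := by
  calc ∫ x, f x = ∫ x : ({(0:E)}ᶜ : Set E), f x.1 ∂((volume : Measure E).comap Subtype.val) := by
        rw [integral_subtype_comap (measurableSet_singleton _).compl,
          MeasureTheory.restrict_compl_singleton]
    _ = _ := by
        rw [← (volume : Measure E).measurePreserving_homeomorphUnitSphereProd.integral_comp
          (Homeomorph.measurableEmbedding _) (fun p => f (p.2.1 • p.1.1))]
        refine integral_congr_ae (Filter.Eventually.of_forall fun x => ?_)
        simp only [homeomorphUnitSphereProd_apply_fst_coe, homeomorphUnitSphereProd_apply_snd_coe]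
        rw [smul_inv_smul₀ (norm_ne_zero_iff.2 x.2)]

/-- Step B : full-space integral equals sphere integral times `auxC`. -/
lemma stepB (m : ℕ) (v : 𝔼 (m+2)) (h : ℝ → ℝ) :
    ∫ x : 𝔼 (m+2), h ((inner ℝ v x : ℝ) / ‖x‖) * wFn ‖x‖
      = (∫ θ : sphere (0 : 𝔼 (m+2)) 1,
          h ((inner ℝ v (θ : 𝔼 (m+2)) : ℝ)) ∂(volume : Measure (𝔼 (m+2))).toSphere) * auxC m := by
  rw [aux_disint]
  have hdim : Module.finrank ℝ (𝔼 (m+2)) - 1 = m + 1 := by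
    rw [finrank_euclideanSpace_fin]
    omega
  rw [hdim]
  have hpt : ∀ p : sphere (0 : 𝔼 (m+2)) 1 × Ioi (0:ℝ),
      h ((inner ℝ v (p.2.1 • p.1.1) : ℝ) / ‖p.2.1 • p.1.1‖) * wFn ‖p.2.1 • p.1.1‖
        = (fun θ : sphere (0 : 𝔼 (m+2)) 1 => h ((inner ℝ v (θ : 𝔼 (m+2)) : ℝ))) p.1
          * (fun ρ : Ioi (0:ℝ) => wFn ρ.1) p.2 := by
    rintro ⟨θ, ρ⟩
    have hθ : ‖(θ : 𝔼 (m+2))‖ = 1 := mem_sphere_zero_iff_norm.1 θ.2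
    have hρ : (0:ℝ) < ρ.1 := ρ.2
    have hnorm : ‖ρ.1 • (θ : 𝔼 (m+2))‖ = ρ.1 := by
      rw [norm_smul, hθ, mul_one, Real.norm_eq_abs, abs_of_pos hρ]
    simp only [hnorm, real_inner_smul_right]
    rw [mul_div_cancel_left₀ _ (ne_of_gt hρ)]
  calc ∫ p : sphere (0 : 𝔼 (m+2)) 1 × Ioi (0:ℝ),
        h ((inner ℝ v (p.2.1 • p.1.1) : ℝ) / ‖p.2.1 • p.1.1‖) * wFn ‖p.2.1 • p.1.1‖
        ∂((volume : Measure (𝔼 (m+2))).toSphere.prod (Measure.volumeIoiPow (m+1)))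
      = ∫ p : sphere (0 : 𝔼 (m+2)) 1 × Ioi (0:ℝ),
          (fun θ : sphere (0 : 𝔼 (m+2)) 1 => h ((inner ℝ v (θ : 𝔼 (m+2)) : ℝ))) p.1
            * (fun ρ : Ioi (0:ℝ) => wFn ρ.1) p.2
          ∂((volume : Measure (𝔼 (m+2))).toSphere.prod (Measure.volumeIoiPow (m+1))) :=
        integral_congr_ae (Filter.Eventually.of_forall hpt)
    _ = (∫ θ : sphere (0 : 𝔼 (m+2)) 1,
          h ((inner ℝ v (θ : 𝔼 (m+2)) : ℝ)) ∂(volume : Measure (𝔼 (m+2))).toSphere)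
        * ∫ ρ : Ioi (0:ℝ), wFn ρ.1 ∂(Measure.volumeIoiPow (m+1)) :=
        integral_prod_mul (L := ℝ)
          (μ := (volume : Measure (𝔼 (m+2))).toSphere) (ν := Measure.volumeIoiPow (m+1))
          (fun θ : sphere (0 : 𝔼 (m+2)) 1 => h ((inner ℝ v (θ : 𝔼 (m+2)) : ℝ)))
          (fun ρ : Ioi (0:ℝ) => wFn ρ.1)
    _ = _ := by rw [aux_integral_volumeIoiPow]; rfl

/-- Step Rot : rotate `v` to `‖v‖ • e₀`. -/
lemma stepRot (m : ℕ) (v : 𝔼 (m+2)) (h : ℝ → ℝ) :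
    ∫ x : 𝔼 (m+2), h ((inner ℝ v x : ℝ) / ‖x‖) * wFn ‖x‖
      = ∫ x : 𝔼 (m+2), h (‖v‖ * x 0 / ‖x‖) * wFn ‖x‖ := by
  set u : 𝔼 (m+2) := ‖v‖ • (EuclideanSpace.single (0 : Fin (m+2)) (1:ℝ)) with hu
  have hnu : ‖v‖ = ‖u‖ := by
    rw [hu, norm_smul, EuclideanSpace.norm_single, norm_one, mul_one, Real.norm_eq_abs,
      abs_of_nonneg (norm_nonneg v)]
  set f : (𝔼 (m+2)) ≃ₗᵢ[ℝ] (𝔼 (m+2)) := Submodule.reflection (ℝ ∙ (v - u))ᗮ with hf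
  have hfv : f v = u := Submodule.reflection_sub hnu
  have hcomp := f.measurePreserving.integral_comp f.toMeasurableEquiv.measurableEmbedding
    (fun y : 𝔼 (m+2) => h ((inner ℝ u y : ℝ) / ‖y‖) * wFn ‖y‖)
  calc ∫ x : 𝔼 (m+2), h ((inner ℝ v x : ℝ) / ‖x‖) * wFn ‖x‖
      = ∫ x : 𝔼 (m+2), h ((inner ℝ u (f x) : ℝ) / ‖f x‖) * wFn ‖f x‖ := by
        refine integral_congr_ae (Filter.Eventually.of_forall fun x => ?_)
        dsimp only
        rw [← hfv, f.inner_map_map, f.norm_map]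
    _ = ∫ y : 𝔼 (m+2), h ((inner ℝ u y : ℝ) / ‖y‖) * wFn ‖y‖ := hcomp
    _ = _ := by
        refine integral_congr_ae (Filter.Eventually.of_forall fun y => ?_)
        have huy : (inner ℝ u y : ℝ) = ‖v‖ * y 0 := by
          rw [hu, real_inner_smul_left, EuclideanSpace.inner_single_left]
          simp
        dsimp only
        rw [huy]

/-- The slicing measurable equivalence `ℝ^{m+2} ≃ ℝ × ℝ^{m+1}`. -/
def sliceE (m : ℕ) : (𝔼 (m+2)) ≃ᵐ ℝ × (𝔼 (m+1)) :=
  (MeasurableEquiv.toLp 2 (Fin (m+2) → ℝ)).symm.trans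
    ((MeasurableEquiv.piFinSuccAbove (fun _ : Fin (m+2) => ℝ) 0).trans
      ((MeasurableEquiv.refl ℝ).prodCongr (MeasurableEquiv.toLp 2 (Fin (m+1) → ℝ)).symm.symm))

lemma sliceE_mp (m : ℕ) : MeasurePreserving (sliceE m) volume volume := by
  have h1 := EuclideanSpace.volume_preserving_symm_measurableEquiv_toLp (Fin (m+2))
  have h2 := volume_preserving_piFinSuccAbove (fun _ : Fin (m+2) => ℝ) 0
  have h3 : MeasurePreserving
      (⇑((MeasurableEquiv.refl ℝ).prodCongr (MeasurableEquiv.toLp 2 (Fin (m+1) → ℝ)).symm.symm))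
      volume volume := by
    have hp := (MeasurePreserving.id (volume : Measure ℝ)).prod
      (EuclideanSpace.volume_preserving_symm_measurableEquiv_toLp (Fin (m+1))).symm
    exact hp
  exact (h3.comp h2).comp h1

lemma sliceE_fst (m : ℕ) (x : 𝔼 (m+2)) : (sliceE m x).1 = x 0 := rfl

lemma sliceE_snd (m : ℕ) (x : 𝔼 (m+2)) (j : Fin (m+1)) :
    (sliceE m x).2 j = x ((0 : Fin (m+2)).succAbove j) := rfl

lemma sliceE_norm (m : ℕ) (x : 𝔼 (m+2)) :
    ‖x‖ = Real.sqrt ((x 0)^2 + ‖(sliceE m x).2‖^2) := by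
  have hz : ‖(sliceE m x).2‖^2 = ∑ j : Fin (m+1), (x ((0 : Fin (m+2)).succAbove j))^2 := by
    rw [EuclideanSpace.norm_eq]
    rw [Real.sq_sqrt (Finset.sum_nonneg fun j _ => sq_nonneg _)]
    refine Finset.sum_congr rfl fun j _ => ?_
    rw [sliceE_snd, Real.norm_eq_abs, sq_abs]
  rw [hz, EuclideanSpace.norm_eq]
  congr 1
  simp only [Real.norm_eq_abs, sq_abs]
  rw [Fin.sum_univ_succ]
  simp [Fin.zero_succAbove]

lemma sliceE_symm_fst (m : ℕ) (p : ℝ × 𝔼 (m+1)) : ((sliceE m).symm p) 0 = p.1 := by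
  have := sliceE_fst m ((sliceE m).symm p)
  rwa [MeasurableEquiv.apply_symm_apply] at this

lemma sliceE_symm_norm (m : ℕ) (p : ℝ × 𝔼 (m+1)) :
    ‖(sliceE m).symm p‖ = Real.sqrt (p.1^2 + ‖p.2‖^2) := by
  have := sliceE_norm m ((sliceE m).symm p)
  rwa [MeasurableEquiv.apply_symm_apply, sliceE_symm_fst] at this

/-- Step 2D : iterated plane integral via polar coordinates. -/
lemma step2D (m : ℕ) (c : ℝ) (hc : 0 ≤ c) {h : ℝ → ℝ} (hh : Continuous h) :
    ∫ a : ℝ, ∫ s in Ioi (0:ℝ),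
        s ^ m * (h (c * a / Real.sqrt (a^2 + s^2)) * wFn (Real.sqrt (a^2 + s^2)))
      = (∫ α in (0:ℝ)..Real.pi, Real.sin α ^ m * h (c * Real.cos α)) * auxC m := by
  obtain ⟨M, hM⟩ := isCompact_Icc.exists_bound_of_continuousOn (s := Icc (-c) c) hh.continuousOn
  set M' := max M 0 with hM'def
  have hM'nonneg : 0 ≤ M' := le_max_right _ _
  have hMbd : ∀ u : ℝ, |u| ≤ c → ‖h u‖ ≤ M' := fun u hu =>
    le_trans (hM u (abs_le.1 hu |>.imp id id |> fun h' => ⟨h'.1, h'.2⟩)) (le_max_left _ _)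
  set G : ℝ × ℝ → ℝ := fun p => (Ioi (0:ℝ)).indicator
    (fun s => s ^ m * (h (c * p.1 / Real.sqrt (p.1^2 + s^2)) * wFn (Real.sqrt (p.1^2 + s^2)))) p.2
    with hGdef
  have hsqrt_cont : Continuous fun p : ℝ × ℝ => Real.sqrt (p.1^2 + p.2^2) :=
    Real.continuous_sqrt.comp ((continuous_fst.pow 2).add (continuous_snd.pow 2))
  have hFmeas : Measurable fun p : ℝ × ℝ =>
      p.2 ^ m * (h (c * p.1 / Real.sqrt (p.1^2 + p.2^2)) * wFn (Real.sqrt (p.1^2 + p.2^2))) :=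
    (measurable_snd.pow_const m).mul
      ((hh.measurable.comp ((measurable_const.mul measurable_fst).div hsqrt_cont.measurable)).mul
        (wFn_meas.comp hsqrt_cont.measurable))
  have hGmeas : Measurable G := by
    have hG2 : G = fun p : ℝ × ℝ => if 0 < p.2 then
        p.2 ^ m * (h (c * p.1 / Real.sqrt (p.1^2 + p.2^2)) * wFn (Real.sqrt (p.1^2 + p.2^2)))
        else 0 := by
      funext p
      simp [hGdef, Set.indicator_apply, mem_Ioi]
    rw [hG2]
    exact Measurable.ite (measurableSet_lt measurable_const measurable_snd) hFmeas
      measurable_const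
  have hGbound : ∀ p : ℝ × ℝ,
      ‖G p‖ ≤ (closedBall (0 : ℝ × ℝ) 2).indicator (fun _ => 2^m * M') p := by
    intro p
    have hindnn : 0 ≤ (closedBall (0 : ℝ × ℝ) 2).indicator (fun _ => 2^m * M') p :=
      Set.indicator_nonneg (fun _ _ => by positivity) p
    by_cases hp2 : p.2 ∈ Ioi (0:ℝ)
    · by_cases hw : Real.sqrt (p.1^2 + p.2^2) ∈ Set.Ioo (1:ℝ) 2
      · have hs1 : |p.1| ≤ Real.sqrt (p.1^2 + p.2^2) := by
          rw [← Real.sqrt_sq_eq_abs]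
          exact Real.sqrt_le_sqrt (le_add_of_nonneg_right (sq_nonneg _))
        have hs2 : |p.2| ≤ Real.sqrt (p.1^2 + p.2^2) := by
          rw [← Real.sqrt_sq_eq_abs]
          exact Real.sqrt_le_sqrt (le_add_of_nonneg_left (sq_nonneg _))
        have hsle : Real.sqrt (p.1^2 + p.2^2) ≤ 2 := hw.2.le
        have hspos : (0:ℝ) < Real.sqrt (p.1^2 + p.2^2) := lt_trans one_pos hw.1
        have hmem : p ∈ closedBall (0 : ℝ × ℝ) 2 := by
          rw [mem_closedBall_zero_iff, Prod.norm_def]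
          exact max_le (by rw [Real.norm_eq_abs]; exact hs1.trans hsle)
            (by rw [Real.norm_eq_abs]; exact hs2.trans hsle)
        rw [Set.indicator_of_mem hmem]
        have harg : |c * p.1 / Real.sqrt (p.1^2 + p.2^2)| ≤ c := by
          rw [abs_div, abs_mul, abs_of_nonneg hc, abs_of_pos hspos, div_le_iff₀ hspos]
          exact mul_le_mul_of_nonneg_left hs1 hc
        have hGp : G p = p.2 ^ m * (h (c * p.1 / Real.sqrt (p.1^2 + p.2^2))
            * wFn (Real.sqrt (p.1^2 + p.2^2))) := by
          simp only [hGdef]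
          exact Set.indicator_of_mem hp2 _
        rw [hGp]
        calc ‖p.2 ^ m * (h (c * p.1 / Real.sqrt (p.1^2 + p.2^2))
              * wFn (Real.sqrt (p.1^2 + p.2^2)))‖
            = |p.2| ^ m * (‖h (c * p.1 / Real.sqrt (p.1^2 + p.2^2))‖
              * |wFn (Real.sqrt (p.1^2 + p.2^2))|) := by
              rw [norm_mul, norm_mul]
              simp [Real.norm_eq_abs, abs_pow]
          _ ≤ 2 ^ m * (M' * 1) := by
              refine mul_le_mul (pow_le_pow_left₀ (abs_nonneg _) (hs2.trans hsle) m) ?_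
                (by positivity) (by positivity)
              exact mul_le_mul (hMbd _ harg) (wFn_abs_le _) (abs_nonneg _) hM'nonneg
          _ = 2 ^ m * M' := by ring
      · have hGp : G p = 0 := by
          simp only [hGdef]
          by_cases hp2' : p.2 ∈ Ioi (0:ℝ)
          · rw [Set.indicator_of_mem hp2', wFn_eq_zero hw, mul_zero, mul_zero]
          · exact Set.indicator_of_notMem hp2' _
        rw [hGp, norm_zero]; exact hindnn
    · have hGp : G p = 0 := by
        simp only [hGdef]
        exact Set.indicator_of_notMem hp2 _
      rw [hGp, norm_zero]; exact hindnn
  have hGint : Integrable G := by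
    refine Integrable.mono' ((integrable_indicator_iff measurableSet_closedBall).2 ?_)
      hGmeas.aestronglyMeasurable (Filter.Eventually.of_forall hGbound)
    exact integrableOn_const measure_closedBall_lt_top.ne
  have hpoint : ∀ p ∈ (Ioi (0:ℝ)) ×ˢ (Ioo (-Real.pi) Real.pi),
      p.1 • G (polarCoord.symm p) = (p.1 ^ (m+1) * wFn p.1) *
        ((Ioo (0:ℝ) Real.pi).indicator (fun α => Real.sin α ^ m * h (c * Real.cos α)) p.2) := by
    rintro ⟨ρ, α⟩ hp
    have hρ : (0:ℝ) < ρ := hp.1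
    have hα : α ∈ Ioo (-Real.pi) Real.pi := hp.2
    have hsymm : polarCoord.symm (ρ, α) = (ρ * Real.cos α, ρ * Real.sin α) := rfl
    have hsum : (ρ * Real.cos α)^2 + (ρ * Real.sin α)^2 = ρ^2 := by
      linear_combination ρ^2 * (Real.sin_sq_add_cos_sq α)
    have hsqrtρ : Real.sqrt ((ρ * Real.cos α)^2 + (ρ * Real.sin α)^2) = ρ := by
      rw [hsum, Real.sqrt_sq hρ.le]
    by_cases hsin : 0 < Real.sin α
    · have hαmem : α ∈ Ioo (0:ℝ) Real.pi := by
        refine ⟨?_, hα.2⟩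
        by_contra hle
        push_neg at hle
        exact absurd hsin
          (not_lt.2 (Real.sin_nonpos_of_nonpos_of_neg_pi_le hle hα.1.le))
      have hmem2 : ρ * Real.sin α ∈ Ioi (0:ℝ) := mul_pos hρ hsin
      rw [hsymm]
      show ρ • ((Ioi (0:ℝ)).indicator _ (ρ * Real.sin α)) = _
      rw [Set.indicator_of_mem hmem2, Set.indicator_of_mem hαmem]
      simp only []
      rw [hsqrtρ]
      have harg : c * (ρ * Real.cos α) / ρ = c * Real.cos α := by
        rw [div_eq_iff hρ.ne']; ring
      rw [harg, smul_eq_mul, mul_pow]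
      ring
    · have h1 : ρ * Real.sin α ∉ Ioi (0:ℝ) := by
        simp only [mem_Ioi, not_lt]
        exact mul_nonpos_iff.2 (Or.inl ⟨hρ.le, not_lt.1 hsin⟩)
      have h2 : α ∉ Ioo (0:ℝ) Real.pi := fun hmem =>
        hsin (Real.sin_pos_of_pos_of_lt_pi hmem.1 hmem.2)
      rw [hsymm]
      show ρ • ((Ioi (0:ℝ)).indicator _ (ρ * Real.sin α)) = _
      rw [Set.indicator_of_notMem h1, Set.indicator_of_notMem h2]
      simp
  calc ∫ a : ℝ, ∫ s in Ioi (0:ℝ),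
        s ^ m * (h (c * a / Real.sqrt (a^2 + s^2)) * wFn (Real.sqrt (a^2 + s^2)))
      = ∫ a : ℝ, ∫ s : ℝ, G (a, s) := by
        refine integral_congr_ae (Filter.Eventually.of_forall fun a => ?_)
        exact (integral_indicator measurableSet_Ioi).symm
    _ = ∫ p : ℝ × ℝ, G p := (integral_prod G hGint).symm
    _ = ∫ p in polarCoord.target, p.1 • G (polarCoord.symm p) :=
        (integral_comp_polarCoord_symm G).symm
    _ = ∫ p in (Ioi (0:ℝ)) ×ˢ (Ioo (-Real.pi) Real.pi), (p.1 ^ (m+1) * wFn p.1) *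
          ((Ioo (0:ℝ) Real.pi).indicator (fun α => Real.sin α ^ m * h (c * Real.cos α)) p.2) := by
        rw [polarCoord_target]
        exact setIntegral_congr_fun (measurableSet_Ioi.prod measurableSet_Ioo) hpoint
    _ = (∫ ρ in Ioi (0:ℝ), ρ ^ (m+1) * wFn ρ) *
          ∫ α in Ioo (-Real.pi) Real.pi,
            (Ioo (0:ℝ) Real.pi).indicator (fun α => Real.sin α ^ m * h (c * Real.cos α)) α :=
        setIntegral_prod_mul (μ := (volume : Measure ℝ)) (ν := (volume : Measure ℝ))
          (fun ρ : ℝ => ρ ^ (m+1) * wFn ρ)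
          (fun α : ℝ => (Ioo (0:ℝ) Real.pi).indicator
            (fun α => Real.sin α ^ m * h (c * Real.cos α)) α)
          (Ioi (0:ℝ)) (Ioo (-Real.pi) Real.pi)
    _ = auxC m * ∫ α in Ioo (0:ℝ) Real.pi, Real.sin α ^ m * h (c * Real.cos α) := by
        rw [setIntegral_indicator measurableSet_Ioo]
        congr 1
        rw [Set.inter_eq_self_of_subset_right
          (Ioo_subset_Ioo (by linarith [Real.pi_pos]) le_rfl)]
    _ = _ := by
        rw [← integral_Ioc_eq_integral_Ioo,
          ← intervalIntegral.integral_of_le Real.pi_pos.le, mul_comm]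

/-- Step Slice : full-space integral in sliced coordinates. -/
lemma stepSlice (m : ℕ) (c : ℝ) (hc : 0 ≤ c) {h : ℝ → ℝ} (hh : Continuous h) :
    ∫ x : 𝔼 (m+2), h (c * x 0 / ‖x‖) * wFn ‖x‖
      = ((volume : Measure (𝔼 (m+1))).toSphere univ).toReal *
        ((∫ α in (0:ℝ)..Real.pi, Real.sin α ^ m * h (c * Real.cos α)) * auxC m) := by
  obtain ⟨M, hM⟩ := isCompact_Icc.exists_bound_of_continuousOn (s := Icc (-c) c) hh.continuousOn
  set M' := max M 0 with hM'def
  have hM'nonneg : 0 ≤ M' := le_max_right _ _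
  have hMbd : ∀ u : ℝ, |u| ≤ c → ‖h u‖ ≤ M' := fun u hu =>
    le_trans (hM u (abs_le.1 hu)) (le_max_left _ _)
  set Ψ : ℝ × (𝔼 (m+1)) → ℝ := fun p =>
    h (c * p.1 / Real.sqrt (p.1^2 + ‖p.2‖^2)) * wFn (Real.sqrt (p.1^2 + ‖p.2‖^2)) with hΨdef
  have hsq2 : Continuous fun p : ℝ × (𝔼 (m+1)) => Real.sqrt (p.1^2 + ‖p.2‖^2) :=
    Real.continuous_sqrt.comp ((continuous_fst.pow 2).add (continuous_snd.norm.pow 2))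
  have hΨmeas : Measurable Ψ :=
    (hh.measurable.comp ((measurable_const.mul measurable_fst).div hsq2.measurable)).mul
      (wFn_meas.comp hsq2.measurable)
  have hΨbound : ∀ p : ℝ × (𝔼 (m+1)),
      ‖Ψ p‖ ≤ (closedBall (0 : ℝ × (𝔼 (m+1))) 2).indicator (fun _ => M') p := by
    intro p
    have hindnn : 0 ≤ (closedBall (0 : ℝ × (𝔼 (m+1))) 2).indicator (fun _ => M') p :=
      Set.indicator_nonneg (fun _ _ => hM'nonneg) p
    by_cases hw : Real.sqrt (p.1^2 + ‖p.2‖^2) ∈ Set.Ioo (1:ℝ) 2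
    · have hs1 : |p.1| ≤ Real.sqrt (p.1^2 + ‖p.2‖^2) := by
        rw [← Real.sqrt_sq_eq_abs]
        exact Real.sqrt_le_sqrt (le_add_of_nonneg_right (sq_nonneg _))
      have hs2 : ‖p.2‖ ≤ Real.sqrt (p.1^2 + ‖p.2‖^2) := by
        conv_lhs => rw [← Real.sqrt_sq (norm_nonneg p.2)]
        exact Real.sqrt_le_sqrt (le_add_of_nonneg_left (sq_nonneg _))
      have hsle : Real.sqrt (p.1^2 + ‖p.2‖^2) ≤ 2 := hw.2.le
      have hspos : (0:ℝ) < Real.sqrt (p.1^2 + ‖p.2‖^2) := lt_trans one_pos hw.1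
      have hmem : p ∈ closedBall (0 : ℝ × (𝔼 (m+1))) 2 := by
        rw [mem_closedBall_zero_iff, Prod.norm_def]
        exact max_le (by rw [Real.norm_eq_abs]; exact hs1.trans hsle) (hs2.trans hsle)
      rw [Set.indicator_of_mem hmem]
      have harg : |c * p.1 / Real.sqrt (p.1^2 + ‖p.2‖^2)| ≤ c := by
        rw [abs_div, abs_mul, abs_of_nonneg hc, abs_of_pos hspos, div_le_iff₀ hspos]
        exact mul_le_mul_of_nonneg_left hs1 hc
      calc ‖Ψ p‖ = ‖h (c * p.1 / Real.sqrt (p.1^2 + ‖p.2‖^2))‖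
            * |wFn (Real.sqrt (p.1^2 + ‖p.2‖^2))| := by
            simp only [hΨdef]; simp [norm_mul, Real.norm_eq_abs]
        _ ≤ M' * 1 := mul_le_mul (hMbd _ harg) (wFn_abs_le _) (abs_nonneg _) hM'nonneg
        _ = M' := mul_one _
    · have hΨp : Ψ p = 0 := by simp only [hΨdef]; simp [wFn_eq_zero hw]
      rw [hΨp, norm_zero]; exact hindnn
  have hΨint : Integrable Ψ := by
    refine Integrable.mono' ((integrable_indicator_iff measurableSet_closedBall).2 ?_)
      hΨmeas.aestronglyMeasurable (Filter.Eventually.of_forall hΨbound)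
    exact integrableOn_const measure_closedBall_lt_top.ne
  have htrans : ∫ x : 𝔼 (m+2), h (c * x 0 / ‖x‖) * wFn ‖x‖ = ∫ p : ℝ × (𝔼 (m+1)), Ψ p := by
    rw [← (sliceE_mp m).integral_comp (sliceE m).measurableEmbedding Ψ]
    refine integral_congr_ae (Filter.Eventually.of_forall fun x => ?_)
    have h1 : (sliceE m x).1 = x 0 := sliceE_fst m x
    have h2 : Real.sqrt ((x 0)^2 + ‖(sliceE m x).2‖^2) = ‖x‖ := (sliceE_norm m x).symm
    simp only [hΨdef]
    rw [h1, h2]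
  have hS : ((m+1 : ℕ) : ℝ) * ((volume : Measure (𝔼 (m+1))) (ball 0 1)).toReal
      = ((volume : Measure (𝔼 (m+1))).toSphere univ).toReal := by
    rw [Measure.toSphere_apply_univ, finrank_euclideanSpace_fin, ENNReal.toReal_mul,
      ENNReal.toReal_natCast]
  have hrad : ∀ a : ℝ, ∫ z : 𝔼 (m+1), Ψ (a, z)
      = ((volume : Measure (𝔼 (m+1))).toSphere univ).toReal *
        ∫ s in Ioi (0:ℝ), s ^ m * (h (c * a / Real.sqrt (a^2 + s^2))
          * wFn (Real.sqrt (a^2 + s^2))) := by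
    intro a
    have hint := integral_fun_norm_addHaar (volume : Measure (𝔼 (m+1)))
      (fun s => h (c * a / Real.sqrt (a^2 + s^2)) * wFn (Real.sqrt (a^2 + s^2)))
    rw [finrank_euclideanSpace_fin] at hint
    simp only [Nat.add_sub_cancel, nsmul_eq_mul, smul_eq_mul] at hint
    calc ∫ z : 𝔼 (m+1), Ψ (a, z)
        = ∫ z : 𝔼 (m+1), h (c * a / Real.sqrt (a^2 + ‖z‖^2)) * wFn (Real.sqrt (a^2 + ‖z‖^2)) :=
          rfl
      _ = (m+1 : ℕ) * (((volume : Measure (𝔼 (m+1))) (ball 0 1)).toReal *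
            ∫ s in Ioi (0:ℝ), s ^ m * (h (c * a / Real.sqrt (a^2 + s^2))
              * wFn (Real.sqrt (a^2 + s^2)))) := hint
      _ = _ := by rw [← hS]; ring
  calc ∫ x : 𝔼 (m+2), h (c * x 0 / ‖x‖) * wFn ‖x‖
      = ∫ p : ℝ × (𝔼 (m+1)), Ψ p := htrans
    _ = ∫ a : ℝ, ∫ z : 𝔼 (m+1), Ψ (a, z) := integral_prod Ψ hΨint
    _ = ∫ a : ℝ, ((volume : Measure (𝔼 (m+1))).toSphere univ).toReal *
          ∫ s in Ioi (0:ℝ), s ^ m * (h (c * a / Real.sqrt (a^2 + s^2))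
            * wFn (Real.sqrt (a^2 + s^2))) :=
        integral_congr_ae (Filter.Eventually.of_forall hrad)
    _ = ((volume : Measure (𝔼 (m+1))).toSphere univ).toReal *
          ∫ a : ℝ, ∫ s in Ioi (0:ℝ), s ^ m * (h (c * a / Real.sqrt (a^2 + s^2))
            * wFn (Real.sqrt (a^2 + s^2))) := integral_const_mul _ _
    _ = _ := by rw [step2D m c hc hh]

/-- The zonal integration formula on the unit sphere. -/
lemma zonal_aux (m : ℕ) (v : 𝔼 (m+2)) {h : ℝ → ℝ} (hh : Continuous h) :
    ∫ θ : sphere (0 : 𝔼 (m+2)) 1, h ((inner ℝ v (θ : 𝔼 (m+2)) : ℝ))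
        ∂(volume : Measure (𝔼 (m+2))).toSphere
      = ((volume : Measure (𝔼 (m+1))).toSphere univ).toReal *
          ∫ α in (0:ℝ)..Real.pi, Real.sin α ^ m * h (‖v‖ * Real.cos α) := by
  have hB := stepB m v h
  rw [stepRot m v h, stepSlice m ‖v‖ (norm_nonneg v) hh] at hB
  have h2 : (((volume : Measure (𝔼 (m+1))).toSphere univ).toReal *
      ∫ α in (0:ℝ)..Real.pi, Real.sin α ^ m * h (‖v‖ * Real.cos α)) * auxC m
      = (∫ θ : sphere (0 : 𝔼 (m+2)) 1, h ((inner ℝ v (θ : 𝔼 (m+2)) : ℝ))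
          ∂(volume : Measure (𝔼 (m+2))).toSphere) * auxC m := by
    rw [mul_assoc]; exact hB
  exact (mul_right_cancel₀ (auxC_pos m).ne' h2).symm

lemma gammaN'_neg (k : ℕ) (t : ℝ) : gammaN' k (-t) = -gammaN' k t := by
  have h := intervalIntegral.integral_comp_sub_left (a := (0:ℝ)) (b := Real.pi)
    (fun α => Real.cos α * Real.exp (t * Real.cos α) * Real.sin α ^ (k-2)) Real.pi
  simp only [sub_zero, sub_self, Real.cos_pi_sub, Real.sin_pi_sub, mul_neg, neg_mul] at h
  rw [intervalIntegral.integral_neg] at h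
  unfold gammaN'
  have h2 : ∫ x in (0:ℝ)..Real.pi, Real.cos x * Real.exp (-t * Real.cos x) * Real.sin x ^ (k-2)
      = ∫ x in (0:ℝ)..Real.pi,
          Real.cos x * Real.exp (-(t * Real.cos x)) * Real.sin x ^ (k-2) := by
    simp only [neg_mul]
  rw [h2]
  linarith [h]

lemma sphereVol_eq (m : ℕ) :
    sphereVol m = ((volume : Measure (𝔼 (m+1))).toSphere Set.univ).toReal := by
  unfold sphereVol sphereMeasure
  rw [Measure.smul_apply,
    Measure.map_apply (show Measurable (fun y : sphere (0 : 𝔼 (m+1)) 1 => (1:ℝ) • (y : 𝔼 (m+1))) from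
      (continuous_subtype_val.const_smul (1:ℝ)).measurable) MeasurableSet.univ]
  simp

end ZonalAux

/-- For every integer `n ≥ 2`, every `v ∈ ℝⁿ` and every radius `r > 0`,
`∫_{S^{n-1}_r} ⟨v,y⟩ e^{−2⟨v,y⟩} dσ_r(y) = − r^n · |v| · γ_n'(2r|v|) · vol(S^{n-2})`. -/
theorem integral_inner_mul_exp_inner_sphere (n : ℕ) (hn : 2 ≤ n)
    (v : EuclideanSpace ℝ (Fin n)) (r : ℝ) (hr : 0 < r) :
    ∫ y, (inner ℝ v y : ℝ) * Real.exp (-(2 * (inner ℝ v y : ℝ))) ∂(sphereMeasure n r) =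
      -(r ^ n * ‖v‖ * gammaN' n (2 * r * ‖v‖) * sphereVol (n - 2)) := by
  obtain ⟨m, rfl⟩ : ∃ m, n = m + 2 := ⟨n - 2, by omega⟩
  have hm2 : m + 2 - 2 = m := rfl
  have hm1 : m + 2 - 1 = m + 1 := rfl
  rw [hm2]
  unfold sphereMeasure
  rw [integral_smul_measure]
  have hi : Continuous fun y : EuclideanSpace ℝ (Fin (m+2)) => (inner ℝ v y : ℝ) :=
    Continuous.inner continuous_const continuous_id
  have hgc : Continuous fun y : EuclideanSpace ℝ (Fin (m+2)) =>
      (inner ℝ v y : ℝ) * Real.exp (-(2 * (inner ℝ v y : ℝ))) :=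
    hi.mul (Real.continuous_exp.comp (continuous_const.mul hi).neg)
  have hmap : AEMeasurable
      (fun y : Metric.sphere (0 : EuclideanSpace ℝ (Fin (m+2))) 1 =>
        r • (y : EuclideanSpace ℝ (Fin (m+2))))
      ((volume : Measure (EuclideanSpace ℝ (Fin (m+2)))).toSphere) :=
    (continuous_subtype_val.const_smul r).measurable.aemeasurable
  rw [integral_map hmap hgc.aestronglyMeasurable]
  set h : ℝ → ℝ := fun u => (r * u) * Real.exp (-(2 * (r * u))) with hhdef
  have hhcont : Continuous h := by
    have h1 : Continuous fun u : ℝ => r * u := continuous_const.mul continuous_id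
    exact h1.mul (Real.continuous_exp.comp (continuous_const.mul h1).neg)
  have hpt : ∀ θ : Metric.sphere (0 : EuclideanSpace ℝ (Fin (m+2))) 1,
      (inner ℝ v (r • (θ : EuclideanSpace ℝ (Fin (m+2)))) : ℝ) *
          Real.exp (-(2 * (inner ℝ v (r • (θ : EuclideanSpace ℝ (Fin (m+2)))) : ℝ)))
        = h ((inner ℝ v (θ : EuclideanSpace ℝ (Fin (m+2))) : ℝ)) := by
    intro θ
    simp only [hhdef]
    rw [real_inner_smul_right]
  rw [integral_congr_ae (Filter.Eventually.of_forall hpt), zonal_aux m v hhcont,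
    ← sphereVol_eq m]
  have hJ : (∫ α in (0:ℝ)..Real.pi, Real.sin α ^ m * h (‖v‖ * Real.cos α))
      = -(r * ‖v‖ * gammaN' (m+2) (2 * r * ‖v‖)) := by
    have hodd : gammaN' (m+2) (-(2 * r * ‖v‖)) = -gammaN' (m+2) (2 * r * ‖v‖) :=
      gammaN'_neg _ _
    have hpt2 : ∀ α : ℝ, Real.sin α ^ m * h (‖v‖ * Real.cos α)
        = (r * ‖v‖) * (Real.cos α * Real.exp ((-(2 * r * ‖v‖)) * Real.cos α)
            * Real.sin α ^ m) := by
      intro α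
      simp only [hhdef]
      rw [show -(2 * (r * (‖v‖ * Real.cos α))) = (-(2 * r * ‖v‖)) * Real.cos α by ring]
      ring
    rw [intervalIntegral.integral_congr (fun α _ => hpt2 α),
      intervalIntegral.integral_const_mul]
    have hgam : (∫ α in (0:ℝ)..Real.pi, Real.cos α
        * Real.exp ((-(2 * r * ‖v‖)) * Real.cos α) * Real.sin α ^ m)
        = gammaN' (m+2) (-(2 * r * ‖v‖)) := rfl
    rw [hgam, hodd]
    ring
  rw [hJ, hm1, ENNReal.toReal_ofReal (by positivity : (0:ℝ) ≤ r ^ (m+1)), smul_eq_mul]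
  ring
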